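/- Let L ≤ 2^(n/16) and suppose c^n = L ≤ q^n with c ≥ 2^(1/16). Any rewriting code storing L values in n cells of q levels guarantees at most O(q/c) rewrites; specifically, if each rewrite must be able to reach any of L-1 ≥ c^n - 1 new values, then the worst-case number of unit level increments per rewrite is r = Ω(n·c), so the number of guaranteed rewrites is at most n(q-1)/(r+1) = O(q/c). -/

import Mathlib

/-- `Supports n q L dec upd t` means: the rewriting code with decoding map `dec` and
(deterministic) update strategy `upd`, on `n` cells of `q` levels and data alphabet
`Fin L` (complete data graph), guarantees `t` rewrites starting from the all-zero
state: for every rewrite sequence `v` the induced chain of states only raises cell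
levels, keeps all levels `≤ q-1`, and decodes to the requested values. -/
def Supports (n q L : ℕ) (dec : (Fin n → ℕ) → Fin L)
    (upd : (Fin n → ℕ) → Fin L → (Fin n → ℕ)) (t : ℕ) : Prop :=
  ∀ v : ℕ → Fin L, v 0 ≠ dec (fun _ => 0) → (∀ i, v (i + 1) ≠ v i) →
  ∀ s : ℕ → Fin n → ℕ, s 0 = (fun _ => 0) → (∀ i, s (i + 1) = upd (s i) (v i)) →
  ∀ i < t, (∀ j, s i j ≤ s (i + 1) j) ∧ (∀ j, s (i + 1) j ≤ q - 1) ∧ dec (s (i + 1)) = v i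

namespace Stmt11Aux

def toSym {k r : ℕ} (d : Fin k → ℕ) (hd : ∑ i, d i = r) : Sym (Fin k) r :=
  ⟨∑ i, (d i) • ({i} : Multiset (Fin k)), by
    rw [← hd]
    induction (Finset.univ : Finset (Fin k)) using Finset.induction with
    | empty => simp
    | insert _ _ h ih => simp [Finset.sum_insert h, ih]⟩

lemma count_toSym {k r : ℕ} (d : Fin k → ℕ) (hd : ∑ i, d i = r) (j : Fin k) :
    Multiset.count j (toSym d hd).1 = d j := by
  simp [toSym, Multiset.count_sum', Multiset.count_nsmul, Multiset.count_singleton]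

lemma toSym_inj {k r : ℕ} (d d' : Fin k → ℕ) (hd : ∑ i, d i = r) (hd' : ∑ i, d' i = r)
    (h : toSym d hd = toSym d' hd') : d = d' := by
  funext j
  have h2 : Multiset.count j (toSym d hd).1 = Multiset.count j (toSym d' hd').1 := by rw [h]
  rwa [count_toSym, count_toSym] at h2

lemma pow_le_exp_mul_factorial : ∀ m : ℕ, (m : ℝ) ^ m ≤ Real.exp 1 ^ m * m.factorial := by
  intro m
  induction m with
  | zero => simp
  | succ m ih =>
    rcases Nat.eq_zero_or_pos m with hm | hm
    · subst hm
      simpa using Real.one_le_exp (by norm_num)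
    have hmpos : (0:ℝ) < m := by exact_mod_cast hm
    have h1 : ((m:ℝ) + 1) ^ m ≤ Real.exp 1 * (m:ℝ) ^ m := by
      have : ((m:ℝ) + 1) = (m:ℝ) * (1 + 1/(m:ℝ)) := by field_simp
      rw [this, mul_pow]
      have h2 : (1 + 1/(m:ℝ)) ^ m ≤ Real.exp 1 := by
        have := Real.add_one_le_exp (1/(m:ℝ))
        calc (1 + 1/(m:ℝ)) ^ m ≤ (Real.exp (1/(m:ℝ))) ^ m := by
              apply pow_le_pow_left₀ (by positivity)
              linarith
          _ = Real.exp 1 := by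
              rw [← Real.exp_nat_mul]
              congr 1
              field_simp
      calc (m:ℝ)^m * (1 + 1/(m:ℝ))^m ≤ (m:ℝ)^m * Real.exp 1 := by
            apply mul_le_mul_of_nonneg_left h2 (by positivity)
        _ = Real.exp 1 * (m:ℝ)^m := by ring
    have : ((m:ℝ)+1) ^ (m+1) = ((m:ℝ)+1) * ((m:ℝ)+1)^m := by ring
    push_cast
    rw [this]
    calc ((m:ℝ)+1) * ((m:ℝ)+1)^m ≤ ((m:ℝ)+1) * (Real.exp 1 * (m:ℝ)^m) := by
          apply mul_le_mul_of_nonneg_left h1 (by positivity)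
      _ ≤ ((m:ℝ)+1) * (Real.exp 1 * (Real.exp 1 ^ m * m.factorial)) := by
          apply mul_le_mul_of_nonneg_left _ (by positivity)
          apply mul_le_mul_of_nonneg_left ih (by positivity)
      _ = Real.exp 1 ^ (m+1) * (((m:ℝ)+1) * m.factorial) := by ring
      _ = Real.exp 1 ^ (m+1) * ((m+1).factorial) := by
          rw [Nat.factorial_succ]; push_cast; ring


lemma choose_numeric (n : ℕ) (hn : 300 ≤ n) :
    (((n + (n / 512 + 1)).choose (n / 512 + 1) : ℕ) : ℝ) < (2 : ℝ) ^ ((n : ℝ) / 16) := by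
  set r := n / 512 + 1 with hr
  have h512 : n ≤ 512 * r := by have := Nat.div_add_mod n 512; omega
  have hr1 : 1 ≤ r := Nat.le_add_left 1 _
  have hrR : (1:ℝ) ≤ (r:ℝ) := by exact_mod_cast hr1
  have h512R : (n:ℝ) ≤ 512 * r := by exact_mod_cast h512
  have h1 : ((n+r).choose r : ℝ) * (r.factorial : ℝ) ≤ ((n:ℝ)+r)^r := by
    have h : (n+r).choose r * r.factorial ≤ (n+r)^r := by
      rw [mul_comm, ← Nat.descFactorial_eq_factorial_mul_choose]
      exact Nat.descFactorial_le_pow _ _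
    exact_mod_cast h
  have h2 : (r:ℝ)^r ≤ Real.exp 1 ^ r * r.factorial := pow_le_exp_mul_factorial r
  have hepos : (0:ℝ) < Real.exp 1 := Real.exp_pos 1
  have he3 : Real.exp 1 ≤ 3 := by
    have := Real.exp_one_lt_d9; linarith
  have hC : ((n+r).choose r : ℝ) * (r:ℝ)^r ≤ (2048*(r:ℝ))^r := by
    calc ((n+r).choose r : ℝ) * (r:ℝ)^r
        ≤ ((n+r).choose r : ℝ) * (Real.exp 1 ^ r * r.factorial) := by
          apply mul_le_mul_of_nonneg_left h2 (by positivity)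
      _ = Real.exp 1 ^ r * (((n+r).choose r : ℝ) * r.factorial) := by ring
      _ ≤ Real.exp 1 ^ r * ((n:ℝ)+r)^r := by
          apply mul_le_mul_of_nonneg_left h1 (by positivity)
      _ = (Real.exp 1 * ((n:ℝ)+r))^r := by rw [mul_pow]
      _ ≤ (2048*(r:ℝ))^r := by
          apply pow_le_pow_left₀ (by positivity)
          nlinarith
  have hcancel : ((n+r).choose r : ℝ) ≤ (2048:ℝ)^r := by
    have hrpow : (0:ℝ) < (r:ℝ)^r := by positivity
    have : ((n+r).choose r : ℝ) * (r:ℝ)^r ≤ (2048:ℝ)^r * (r:ℝ)^r := by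
      rw [← mul_pow]; exact hC
    exact le_of_mul_le_mul_right this hrpow
  have hpow2 : (2048:ℝ)^r = (2:ℝ)^(11*r) := by
    rw [pow_mul]; norm_num
  have hexp : (11*r : ℝ) < (n:ℝ)/16 := by
    have hdiv : ((n/512 : ℕ) : ℝ) ≤ (n:ℝ)/512 := Nat.cast_div_le
    have hrle : (r:ℝ) ≤ (n:ℝ)/512 + 1 := by
      rw [hr]; push_cast; linarith
    have hnR : (300:ℝ) ≤ (n:ℝ) := by exact_mod_cast hn
    nlinarith
  calc ((n+r).choose r : ℝ) ≤ (2:ℝ)^(11*r) := by rw [← hpow2]; exact hcancel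
    _ = (2:ℝ)^((11*r : ℕ) : ℝ) := by rw [Real.rpow_natCast]
    _ < (2:ℝ)^((n:ℝ)/16) := by
        apply Real.rpow_lt_rpow_of_exponent_lt one_lt_two
        push_cast; push_cast at hexp; exact hexp


/-- sequence of (state, next value) pairs -/
def seq {n L : ℕ} (upd : (Fin n → ℕ) → Fin L → (Fin n → ℕ))
    (pick : (Fin n → ℕ) → Fin L → Fin L) (d0 : Fin L) : ℕ → ((Fin n → ℕ) × Fin L)
  | 0 => ((fun _ => 0), pick (fun _ => 0) d0)
  | i+1 =>
    let p := seq upd pick d0 i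
    (upd p.1 p.2, pick (upd p.1 p.2) p.2)

def prevv {L : ℕ} (d0 : Fin L) (v : ℕ → Fin L) : ℕ → Fin L
  | 0 => d0
  | i+1 => v i

/-- modified state sequence -/
def seq2 {n L : ℕ} (upd : (Fin n → ℕ) → Fin L → (Fin n → ℕ)) (v : ℕ → Fin L) :
    ℕ → (Fin n → ℕ)
  | 0 => fun _ => 0
  | i+1 => upd (seq2 upd v i) (v i)

lemma key {n q L : ℕ} (r t : ℕ) (dec : (Fin n → ℕ) → Fin L)
    (upd : (Fin n → ℕ) → Fin L → (Fin n → ℕ))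
    (hB : (n + r).choose r < L)
    (h : Supports n q L dec upd t) : t * (r + 1) ≤ n * (q - 1) := by
  have hCpos : 0 < (n + r).choose r := Nat.choose_pos (Nat.le_add_left r n)
  have hL : 2 ≤ L := by omega
  haveI : NeZero L := ⟨by omega⟩
  haveI : Nontrivial (Fin L) := Fin.nontrivial_iff_two_le.mpr hL
  set inc : (Fin n → ℕ) → Fin L → ℕ := fun x a => ∑ j, (upd x a j - x j) with hinc
  have hne : ∀ p : Fin L, (Finset.univ.erase p).Nonempty := by
    intro p
    rw [← Finset.card_pos, Finset.card_erase_of_mem (Finset.mem_univ p), Finset.card_univ,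
      Fintype.card_fin]
    omega
  have hex : ∀ (x : Fin n → ℕ) (p : Fin L), ∃ a ∈ Finset.univ.erase p,
      ∀ b ∈ Finset.univ.erase p, inc x b ≤ inc x a :=
    fun x p => Finset.exists_max_image _ (inc x) (hne p)
  choose pick hpickmem hpickmax using hex
  set s : ℕ → Fin n → ℕ := fun i => (seq upd pick (dec fun _ => 0) i).1 with hs
  set v : ℕ → Fin L := fun i => (seq upd pick (dec fun _ => 0) i).2 with hv
  have hs0 : s 0 = fun _ => 0 := rfl
  have hss : ∀ i, s (i+1) = upd (s i) (v i) := fun i => rfl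
  have hvp : ∀ i, v i = pick (s i) (prevv (dec fun _ => 0) v i) := by
    intro i; cases i <;> rfl
  have hvne : ∀ i, v i ≠ prevv (dec fun _ => 0) v i := by
    intro i
    rw [hvp i]
    exact (Finset.mem_erase.mp (hpickmem (s i) (prevv (dec fun _ => 0) v i))).1
  have hv0 : v 0 ≠ dec (fun _ => 0) := hvne 0
  have hvss : ∀ i, v (i+1) ≠ v i := fun i => hvne (i+1)
  have hmain := h v hv0 hvss s hs0 hss
  -- key fact : decoding of current state is prevv
  have hdecs : ∀ i, i < t → dec (s i) = prevv (dec fun _ => 0) v i := by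
    intro i hit
    cases i with
    | zero => rfl
    | succ m => exact (hmain m (by omega)).2.2
  -- main claim
  have claim : ∀ i, i < t → r + 1 ≤ inc (s i) (v i) := by
    intro i hit
    by_contra hcon
    have hle : inc (s i) (v i) ≤ r := by omega
    set p := prevv (dec fun _ => 0) v i with hp
    have hall : ∀ a ∈ Finset.univ.erase p, inc (s i) a ≤ r := by
      intro a ha
      exact le_trans (by rw [hvp i] at hle ⊢; exact hpickmax (s i) p a ha) hle
    -- every candidate a yields a valid next state
    have hgood : ∀ a, a ∈ Finset.univ.erase p →
        dec (upd (s i) a) = a ∧ ∀ j, s i j ≤ upd (s i) a j := by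
      intro a ha
      have hane : a ≠ p := (Finset.mem_erase.mp ha).1
      obtain ⟨b, hb⟩ := exists_ne a
      set v' : ℕ → Fin L := fun j => if j < i then v j else if (j - i) % 2 = 0 then a else b
        with hv'
      have hv'lt : ∀ j, j < i → v' j = v j := by intro j hj; simp [hv', hj]
      have hv'i : v' i = a := by simp [hv']
      have hs'eq : ∀ j, j ≤ i → seq2 upd v' j = s j := by
        intro j hj
        induction j with
        | zero => rfl
        | succ m ih =>
          show upd (seq2 upd v' m) (v' m) = s (m+1)
          rw [ih (by omega), hv'lt m (by omega), hss m]
      have hv'0 : v' 0 ≠ dec (fun _ => 0) := by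
        rcases Nat.eq_zero_or_pos i with hi | hi
        · subst hi
          rw [hv'i]
          exact fun e => hane (e.trans rfl)
        · rw [hv'lt 0 hi]; exact hv0
      have hv's : ∀ j, v' (j+1) ≠ v' j := by
        intro j
        rcases lt_trichotomy (j+1) i with hj | hj | hj
        · rw [hv'lt _ hj, hv'lt _ (by omega)]; exact hvss j
        · rw [hv'lt j (by omega)]
          have hvi1 : v' (j+1) = a := by simp [hv', hj]
          rw [hvi1]
          have hpj : p = v j := by rw [hp, ← hj]; rfl
          intro e
          exact hane (by rw [hpj]; exact e)
        · have h1 : v' j = if (j - i) % 2 = 0 then a else b := by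
            simp [hv', show ¬ j < i by omega]
          have h2 : v' (j+1) = if (j + 1 - i) % 2 = 0 then a else b := by
            simp [hv', show ¬ j + 1 < i by omega]
          by_cases hpar : (j - i) % 2 = 0
          · rw [h1, h2, if_pos hpar, if_neg (by omega)]
            exact hb
          · rw [h1, h2, if_neg hpar, if_pos (by omega)]
            exact fun e => hb e.symm
      have hm := h v' hv'0 hv's (seq2 upd v') rfl (fun _ => rfl) i hit
      have hsi1 : seq2 upd v' (i+1) = upd (s i) a := by
        show upd (seq2 upd v' i) (v' i) = _
        rw [hs'eq i le_rfl, hv'i]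
      constructor
      · rw [← hsi1]; exact hm.2.2.trans hv'i
      · intro j
        have := hm.1 j
        rwa [hs'eq i le_rfl, hsi1] at this
    -- counting contradiction
    have hdx : dec (s i) = p := hdecs i hit
    set x := s i with hx
    set E : Fin L → (Fin (n+1) → ℕ) :=
      fun a => Fin.cons (r - ∑ j, (upd x a j - x j)) (fun j => upd x a j - x j) with hE
    have hEsum : ∀ a ∈ Finset.univ.erase p, ∑ k, E a k = r := by
      intro a ha
      rw [hE]
      simp only [Fin.sum_cons]
      exact Nat.sub_add_cancel (hall a ha)
    have hzsum : ∑ k, (Fin.cons r (fun _ => 0) : Fin (n+1) → ℕ) k = r := by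
      simp [Fin.sum_cons]
    set ψ0 : Sym (Fin (n+1)) r := toSym _ hzsum with hψ0
    set ψ : Fin L → Sym (Fin (n+1)) r := fun a =>
      if hsum : ∑ k, E a k = r then toSym (E a) hsum else ψ0 with hψ
    have hψne : ∀ a ∈ Finset.univ.erase p, ψ a ≠ ψ0 := by
      intro a ha heq
      rw [hψ] at heq
      simp only [dif_pos (hEsum a ha)] at heq
      have hEeq := toSym_inj _ _ _ hzsum heq
      have hda : ∀ j, upd x a j - x j = 0 := by
        intro j
        have := congrFun hEeq j.succ
        simpa [hE, Fin.cons_succ] using this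
      have hupd : upd x a = x := by
        funext j
        have h1 := (hgood a ha).2 j
        have h2 := hda j
        omega
      have hap : a = p := by
        have h1 := (hgood a ha).1
        rw [hupd, hdx] at h1
        exact h1.symm
      exact (Finset.mem_erase.mp ha).1 hap
    have hinj : Set.InjOn ψ (Finset.univ.erase p) := by
      intro a ha a' ha' heq
      rw [Finset.mem_coe] at ha ha'
      rw [hψ] at heq
      simp only [dif_pos (hEsum a ha), dif_pos (hEsum a' ha')] at heq
      have hEeq := toSym_inj _ _ _ _ heq
      have hupd : upd x a = upd x a' := by
        funext j
        have e1 := congrFun hEeq j.succ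
        rw [hE] at e1
        simp only [Fin.cons_succ] at e1
        have m1 := (hgood a ha).2 j
        have m2 := (hgood a' ha').2 j
        omega
      have h1 := (hgood a ha).1
      rw [hupd, (hgood a' ha').1] at h1
      exact h1.symm
    have hmaps : ∀ a ∈ Finset.univ.erase p, ψ a ∈ Finset.univ.erase ψ0 :=
      fun a ha => Finset.mem_erase.mpr ⟨hψne a ha, Finset.mem_univ _⟩
    have hcard := Finset.card_le_card_of_injOn ψ hmaps hinj
    rw [Finset.card_erase_of_mem (Finset.mem_univ _),
      Finset.card_erase_of_mem (Finset.mem_univ _),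
      Finset.card_univ, Finset.card_univ, Fintype.card_fin] at hcard
    have hsym : Fintype.card (Sym (Fin (n+1)) r) = (n + r).choose r := by
      rw [Sym.card_sym_eq_choose]
      congr 1
      rw [Fintype.card_fin]
      omega
    rw [hsym] at hcard
    omega
  -- summation
  have hsums : ∀ i, i ≤ t → i * (r+1) ≤ ∑ j, s i j := by
    intro i hi
    induction i with
    | zero => simp
    | succ m ih =>
      have hmt : m < t := by omega
      have hmono := (hmain m hmt).1
      have hstep : ∑ j, s (m+1) j = ∑ j, s m j + ∑ j, (s (m+1) j - s m j) := by
        rw [← Finset.sum_add_distrib]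
        apply Finset.sum_congr rfl
        intro j _
        have := hmono j
        omega
      have hincr : r + 1 ≤ ∑ j, (s (m+1) j - s m j) := by
        have hcl := claim m hmt
        rw [hinc] at hcl
        simp only [hss m]
        exact hcl
      have hih := ih (by omega)
      rw [hstep]
      calc (m+1) * (r+1) = m * (r+1) + (r+1) := by ring
        _ ≤ ∑ j, s m j + ∑ j, (s (m+1) j - s m j) := Nat.add_le_add hih hincr
  rcases Nat.eq_zero_or_pos t with ht | ht
  · simp [ht]
  · have hbnd := (hmain (t-1) (by omega)).2.1
    have htt : t - 1 + 1 = t := by omega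
    rw [htt] at hbnd
    have h1 : ∑ j, s t j ≤ ∑ _j : Fin n, (q-1) := Finset.sum_le_sum (fun j _ => hbnd j)
    rw [Finset.sum_const, Finset.card_univ, Fintype.card_fin, smul_eq_mul] at h1
    exact le_trans (hsums t le_rfl) (le_trans (le_refl _) (le_trans (le_refl _) (le_trans (le_refl _) h1)))


end Stmt11Aux

/-- Theorem (upper bound for very large alphabets): for `L ≤ 2^(n/16)`,
`c^n = L ≤ q^n` with `c ≥ 2^(1/16)`, any rewriting code storing `L` values in `n`
cells of `q` levels guarantees at most `O(q/c)` rewrites. -/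
theorem stmt11 : ∃ K : ℝ, 0 < K ∧ ∀ n q L : ℕ, ∀ c : ℝ, 1 ≤ n →
    (L : ℝ) ≤ (2 : ℝ) ^ ((n : ℝ) / 16) →
    (2 : ℝ) ^ ((1 : ℝ) / 16) ≤ c → (L : ℝ) = c ^ n → (L : ℝ) ≤ (q : ℝ) ^ n →
    ∀ dec upd t, Supports n q L dec upd t → (t : ℝ) ≤ K * (q : ℝ) / c := by
  refine ⟨1024, by norm_num, ?_⟩
  intro n q L c hn hL16 hc hLc hLq dec upd t hsup
  have h2pos : (0:ℝ) < (2:ℝ) ^ ((1:ℝ)/16) := Real.rpow_pos_of_pos (by norm_num) _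
  have hcpos : 0 < c := lt_of_lt_of_le h2pos hc
  have hc1 : (1:ℝ) < (2:ℝ) ^ ((1:ℝ)/16) := by
    apply Real.one_lt_rpow_iff_of_pos (by norm_num) |>.mpr
    constructor <;> norm_num
  have hc1' : (1:ℝ) < c := lt_of_lt_of_le hc1 hc
  have hL1 : (1:ℝ) < (L:ℝ) := by
    rw [hLc]
    calc (1:ℝ) < c := hc1'
      _ ≤ c ^ n := le_self_pow₀ hc1'.le (by omega)
  have hL2 : 2 ≤ L := by
    have : 1 < L := by exact_mod_cast hL1
    omega
  have hc2 : c ≤ 2 := by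
    have h1 : c ^ n ≤ (2:ℝ) ^ n := by
      rw [← hLc]
      calc (L:ℝ) ≤ (2:ℝ) ^ ((n:ℝ)/16) := hL16
        _ ≤ (2:ℝ) ^ ((n:ℝ)) := by
            apply Real.rpow_le_rpow_of_exponent_le (by norm_num)
            have : (0:ℝ) ≤ (n:ℝ) := Nat.cast_nonneg n
            linarith
        _ = (2:ℝ) ^ n := Real.rpow_natCast 2 n
    exact le_of_pow_le_pow_left₀ (by omega) (by norm_num) h1
  have ht : t ≤ 512 * q := by
    rcases lt_or_ge n 300 with hsm | hlg
    · have hB : (n + 0).choose 0 < L := by simp; omega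
      have hk := Stmt11Aux.key 0 t dec upd hB hsup
      have h1 : t ≤ n * (q-1) := by simpa using hk
      calc t ≤ n * (q-1) := h1
        _ ≤ 512 * q := Nat.mul_le_mul (by omega) (Nat.sub_le q 1)
    · set r := n / 512 + 1 with hr
      have hnum := Stmt11Aux.choose_numeric n hlg
      have hLge : (2:ℝ) ^ ((n:ℝ)/16) ≤ (L:ℝ) := by
        rw [hLc]
        calc (2:ℝ) ^ ((n:ℝ)/16) = ((2:ℝ) ^ ((1:ℝ)/16)) ^ n := by
              rw [← Real.rpow_natCast ((2:ℝ)^((1:ℝ)/16)) n, ← Real.rpow_mul (by norm_num)]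
              ring_nf
          _ ≤ c ^ n := pow_le_pow_left₀ h2pos.le hc n
      have hB : (n + r).choose r < L := by
        have h2 : (((n+r).choose r : ℕ) : ℝ) < (L:ℝ) := lt_of_lt_of_le hnum hLge
        exact_mod_cast h2
      have hk := Stmt11Aux.key r t dec upd hB hsup
      have h512 : n ≤ 512 * (r+1) := by
        have := Nat.div_add_mod n 512
        omega
      have hq : n * (q-1) ≤ n * q := Nat.mul_le_mul_left n (Nat.sub_le q 1)
      have h1 : t * n ≤ (512 * q) * n := by
        calc t * n ≤ t * (512 * (r+1)) := Nat.mul_le_mul_left t h512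
          _ = 512 * (t * (r+1)) := by ring
          _ ≤ 512 * (n * q) := Nat.mul_le_mul_left 512 (le_trans hk hq)
          _ = (512 * q) * n := by ring
      exact Nat.le_of_mul_le_mul_right h1 (by omega)
  have htR : (t:ℝ) ≤ 512 * (q:ℝ) := by exact_mod_cast ht
  calc (t:ℝ) ≤ 512 * (q:ℝ) := htR
    _ = 1024 * (q:ℝ) / 2 := by ring
    _ ≤ 1024 * (q:ℝ) / c := by
        gcongr
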